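/- Let X be a nonzero real normed space and equip its unit sphere S_X with the kernel k(x,y) := ‖x−y‖. Then the average interval of S_X equals the rendezvous interval of S_X and both are nonempty: q̲(S_X,S_X) = M(S_X) ≤ M̄(S_X) = q(S_X,S_X); that is, 𝓐(X) = 𝓡(X) ≠ ∅. -/

import Mathlib

open MeasureTheory ENNReal
open scoped BigOperators
open scoped NNReal

namespace Rendezvous

variable {X : Type*}

/-- The `n`-th Chebyshev constant `Mₙ(H,L)` of `L` with respect to `H` for the kernel `k`. -/
noncomputable def chebMn (k : X → X → ℝ≥0∞) (n : ℕ) (H L : Set X) : ℝ≥0∞ :=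
  ⨆ w : Fin n → H, ⨅ x : L, (∑ j, k (x : X) ((w j : X))) / (n : ℝ≥0∞)

/-- The `n`-th dual Chebyshev constant `M̄ₙ(H,L)`. -/
noncomputable def chebMnDual (k : X → X → ℝ≥0∞) (n : ℕ) (H L : Set X) : ℝ≥0∞ :=
  ⨅ w : Fin n → H, ⨆ x : L, (∑ j, k (x : X) ((w j : X))) / (n : ℝ≥0∞)

/-- The Chebyshev constant `M(H,L) = sup_{n ≥ 1} Mₙ(H,L)`. -/
noncomputable def chebM (k : X → X → ℝ≥0∞) (H L : Set X) : ℝ≥0∞ :=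
  ⨆ n : ℕ, ⨆ (_ : 1 ≤ n), chebMn k n H L

/-- The dual Chebyshev constant `M̄(H,L) = inf_{n ≥ 1} M̄ₙ(H,L)`. -/
noncomputable def chebMDual (k : X → X → ℝ≥0∞) (H L : Set X) : ℝ≥0∞ :=
  ⨅ n : ℕ, ⨅ (_ : 1 ≤ n), chebMnDual k n H L

/-- The potential `U^μ(x) = ∫ k(x,y) dμ(y)` of a measure. -/
noncomputable def pot [MeasurableSpace X] (k : X → X → ℝ≥0∞) (μ : Measure X) (x : X) : ℝ≥0∞ :=
  ∫⁻ y, k x y ∂μ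

/-- `μ` is a tight (inner regular w.r.t. compact sets) Borel probability measure
concentrated on `H`. -/
def TightProbOn [TopologicalSpace X] [MeasurableSpace X] (μ : Measure X) (H : Set X) : Prop :=
  IsProbabilityMeasure μ ∧ μ.InnerRegular ∧ μ Hᶜ = 0

/-- The quasi-uniform energy `q(H,L) = inf_{μ ∈ M₁(H)} sup_{x ∈ L} U^μ(x)`. -/
noncomputable def qUp [TopologicalSpace X] [MeasurableSpace X] (k : X → X → ℝ≥0∞)
    (H L : Set X) : ℝ≥0∞ :=
  ⨅ (μ : Measure X) (_ : TightProbOn μ H), ⨆ x : L, pot k μ (x : X)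

/-- The dual quasi-uniform energy `q̲(H,L) = sup_{μ ∈ M₁(H)} inf_{x ∈ L} U^μ(x)`. -/
noncomputable def qLow [TopologicalSpace X] [MeasurableSpace X] (k : X → X → ℝ≥0∞)
    (H L : Set X) : ℝ≥0∞ :=
  ⨆ (μ : Measure X) (_ : TightProbOn μ H), ⨅ x : L, pot k μ (x : X)

end Rendezvous

open Rendezvous


set_option linter.unusedSectionVars false
set_option maxHeartbeats 1000000

namespace RendAux


open scoped Classical

variable {X : Type*} [NormedAddCommGroup X] [NormedSpace ℝ X]

/-- Round a point to the first center in `l` whose `δ`-ball contains it, else `y₀`. -/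
noncomputable def pick (δ : ℝ) (y₀ : X) : List X → X → X
  | [] => fun _ => y₀
  | c :: cs => fun y => if y ∈ Metric.ball c δ then c else pick δ y₀ cs y

lemma pick_mem (δ : ℝ) (y₀ : X) (l : List X) (y : X) :
    pick δ y₀ l y = y₀ ∨ pick δ y₀ l y ∈ l := by
  induction l with
  | nil => left; rfl
  | cons c cs ih =>
    by_cases h : y ∈ Metric.ball c δ
    · right; simp [pick, h]
    · rcases ih with h' | h'
      · left; simpa [pick, h] using h'
      · right; simp only [pick, h, if_false]; exact List.mem_cons_of_mem _ h'

lemma pick_close (δ : ℝ) (y₀ : X) (l : List X) (y : X)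
    (h : ∃ c ∈ l, y ∈ Metric.ball c δ) : dist y (pick δ y₀ l y) < δ := by
  induction l with
  | nil => simp at h
  | cons c cs ih =>
    by_cases hc : y ∈ Metric.ball c δ
    · simp only [pick, hc, if_true]; exact Metric.mem_ball.mp hc
    · simp only [pick, hc, if_false]
      apply ih
      rcases h with ⟨d, hd, hyd⟩
      rcases List.mem_cons.mp hd with rfl | hd
      · exact absurd hyd hc
      · exact ⟨d, hd, hyd⟩

variable [MeasurableSpace X] [BorelSpace X]

lemma pick_measurable (δ : ℝ) (y₀ : X) (l : List X) : Measurable (pick δ y₀ l) := by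
  induction l with
  | nil => exact measurable_const
  | cons c cs ih =>
    exact Measurable.ite Metric.isOpen_ball.measurableSet measurable_const ih

lemma pick_edist_measurable (δ : ℝ) (y₀ : X) (l : List X) :
    Measurable (fun y => edist y (pick δ y₀ l y)) := by
  induction l with
  | nil => exact (continuous_id.edist continuous_const).measurable
  | cons c cs ih =>
    have heq : (fun y => edist y (pick δ y₀ (c :: cs) y)) =
        fun y => if y ∈ Metric.ball c δ then edist y c else edist y (pick δ y₀ cs y) := by
      funext y; by_cases h : y ∈ Metric.ball c δ <;> simp [pick, h]
    rw [heq]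
    exact Measurable.ite Metric.isOpen_ball.measurableSet
      (continuous_id.edist continuous_const).measurable ih


end RendAux

namespace RendAux
open scoped Classical
variable {X : Type*} [NormedAddCommGroup X] [NormedSpace ℝ X]

lemma edist_le_two {x y : X} (hx : x ∈ Metric.sphere (0 : X) 1)
    (hy : y ∈ Metric.sphere (0 : X) 1) : edist x y ≤ 2 := by
  have hx' : edist x 0 = 1 := by
    rw [edist_dist, Metric.mem_sphere.mp hx]; simp
  have hy' : edist (0 : X) y = 1 := by
    rw [edist_comm, edist_dist, Metric.mem_sphere.mp hy]; simp
  calc edist x y ≤ edist x 0 + edist 0 y := edist_triangle _ _ _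
    _ = 2 := by rw [hx', hy']; norm_num

variable [MeasurableSpace X] [BorelSpace X]

lemma lintegral_comp_finiteRange (μ : Measure X) (f : X → X) (hf : Measurable f)
    (F : Finset X) (hF : ∀ y, f y ∈ F) (g : X → ℝ≥0∞) (hg : Measurable g) :
    ∫⁻ y, g (f y) ∂μ = ∑ c ∈ F, μ (f ⁻¹' {c}) * g c := by
  have huniv : (Set.univ : Set X) = ⋃ c ∈ F, f ⁻¹' {c} := by
    ext y; simp only [Set.mem_univ, Set.mem_iUnion, Set.mem_preimage, Set.mem_singleton_iff,
      true_iff]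
    exact ⟨f y, hF y, rfl⟩
  have hd : Set.PairwiseDisjoint (↑F) (fun c => f ⁻¹' {c}) := by
    intro a _ b _ hab
    exact Set.disjoint_left.mpr fun y hy hy' => hab (hy.symm.trans hy')
  have hm : ∀ c ∈ F, MeasurableSet (f ⁻¹' {c}) := fun c _ =>
    hf (measurableSet_singleton c)
  calc ∫⁻ y, g (f y) ∂μ = ∫⁻ y in Set.univ, g (f y) ∂μ := (setLIntegral_univ _).symm
    _ = ∫⁻ y in ⋃ c ∈ F, f ⁻¹' {c}, g (f y) ∂μ := by rw [← huniv]
    _ = ∑ c ∈ F, ∫⁻ y in f ⁻¹' {c}, g (f y) ∂μ := lintegral_biUnion_finset hd hm _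
    _ = ∑ c ∈ F, μ (f ⁻¹' {c}) * g c := by
        refine Finset.sum_congr rfl fun c hc => ?_
        rw [setLIntegral_congr_fun (hm c hc)
          (fun y (hy : f y ∈ ({c} : Set X)) => by
            rw [Set.mem_singleton_iff.mp hy]), setLIntegral_const, mul_comm]

/-- the empirical measure of the points `w`. -/
noncomputable def empMeas (n : ℕ) (w : Fin n → Metric.sphere (0 : X) 1) : Measure X :=
  (n : ℝ≥0∞)⁻¹ • ∑ j, Measure.dirac (w j : X)

lemma empMeas_tight (n : ℕ) (hn : 1 ≤ n) (w : Fin n → Metric.sphere (0 : X) 1) :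
    Rendezvous.TightProbOn (empMeas n w) (Metric.sphere (0 : X) 1) := by
  have hn0 : (n : ℝ≥0∞) ≠ 0 := Nat.cast_ne_zero.mpr (by omega)
  have hnt : (n : ℝ≥0∞) ≠ ⊤ := ENNReal.natCast_ne_top n
  refine ⟨⟨?_⟩, ⟨?_⟩, ?_⟩
  · rw [empMeas, Measure.smul_apply, Measure.coe_finset_sum, Finset.sum_apply]
    simp only [Measure.dirac_apply' _ MeasurableSet.univ, Set.mem_univ,
      Set.indicator_of_mem, Pi.one_apply, Finset.sum_const, Finset.card_univ,
      Fintype.card_fin, smul_eq_mul, nsmul_eq_mul, mul_one]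
    exact ENNReal.inv_mul_cancel hn0 hnt
  · intro s hs r hr
    set K : Set X := ↑((Finset.univ.filter fun j => (w j : X) ∈ s).image fun j => (w j : X))
      with hK
    have hKfin : K.Finite := (Finset.finite_toSet _)
    have hKs : K ⊆ s := by
      intro x hx
      simp only [hK, Finset.coe_image, Set.mem_image, Finset.mem_coe,
        Finset.mem_filter, Finset.mem_univ, true_and] at hx
      rcases hx with ⟨j, hj, rfl⟩; exact hj
    refine ⟨K, hKs, hKfin.isCompact, lt_of_lt_of_le hr ?_⟩
    have hKm : MeasurableSet K := hKfin.measurableSet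
    simp only [empMeas, Measure.smul_apply, Measure.coe_finset_sum, Finset.sum_apply,
      smul_eq_mul]
    refine mul_le_mul_right (Finset.sum_le_sum fun j _ => ?_) _
    rw [Measure.dirac_apply' _ hs, Measure.dirac_apply' _ hKm]
    by_cases hjs : (w j : X) ∈ s
    · have hjK : (w j : X) ∈ K := by
        simp only [hK, Finset.coe_image, Set.mem_image, Finset.mem_coe,
          Finset.mem_filter, Finset.mem_univ, true_and]
        exact ⟨j, hjs, rfl⟩
      simp [Set.indicator_of_mem, hjs, hjK]
    · simp [Set.indicator_of_notMem, hjs]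
  · rw [empMeas, Measure.smul_apply, Measure.coe_finset_sum, Finset.sum_apply]
    have h0 : ∀ j : Fin n, Measure.dirac (w j : X) (Metric.sphere (0 : X) 1)ᶜ = 0 := by
      intro j
      rw [Measure.dirac_apply' _ (Metric.isClosed_sphere.measurableSet.compl)]
      exact Set.indicator_of_notMem (by simp [(w j).2]) _
    simp [h0]

lemma empMeas_pot (n : ℕ) (w : Fin n → Metric.sphere (0 : X) 1) (x : X) :
    Rendezvous.pot (fun a b : X => edist a b) (empMeas n w) x
      = (∑ j, edist x (w j : X)) / (n : ℝ≥0∞) := by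
  rw [Rendezvous.pot, empMeas, lintegral_smul_measure, lintegral_finset_sum_measure]
  have h1 : ∀ j : Fin n, ∫⁻ y, edist x y ∂Measure.dirac (w j : X) = edist x (w j : X) :=
    fun j => lintegral_dirac' _ (continuous_const.edist continuous_id).measurable
  simp only [h1]
  rw [ENNReal.div_eq_inv_mul, smul_eq_mul]

lemma ration (F : Finset X) (hFS : ∀ c ∈ F, c ∈ Metric.sphere (0 : X) 1)
    (y₀ : X) (hy₀ : y₀ ∈ Metric.sphere (0 : X) 1)
    (p : X → ℝ≥0∞) (hsum : ∑ c ∈ F, p c = 1) (δ : ℝ≥0) (hδ : 0 < δ) :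
    ∃ n : ℕ, 1 ≤ n ∧ ∃ w : Fin n → Metric.sphere (0 : X) 1,
      ∀ x ∈ Metric.sphere (0 : X) 1,
      (∑ c ∈ F, p c * edist x c) ≤ (∑ j, edist x (w j : X)) / (n : ℝ≥0∞) + 2 * δ ∧
      (∑ j, edist x (w j : X)) / (n : ℝ≥0∞) ≤ (∑ c ∈ F, p c * edist x c) + 2 * δ := by
  -- setup
  set m : ℕ := F.card with hm
  set N : ℕ := max 1 ⌈(m : ℝ≥0) / δ⌉₊ with hN
  have hN1 : 1 ≤ N := le_max_left _ _
  have hN0 : (N : ℝ≥0∞) ≠ 0 := Nat.cast_ne_zero.mpr (by omega)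
  have hNt : (N : ℝ≥0∞) ≠ ⊤ := ENNReal.natCast_ne_top N
  have hmN : (m : ℝ≥0) ≤ δ * N := by
    have h1 : (m : ℝ≥0) / δ ≤ (⌈(m : ℝ≥0) / δ⌉₊ : ℝ≥0) := Nat.le_ceil _
    have h2 : (⌈(m : ℝ≥0) / δ⌉₊ : ℝ≥0) ≤ (N : ℝ≥0) := by exact_mod_cast le_max_right _ _
    calc (m : ℝ≥0) = δ * ((m : ℝ≥0) / δ) := by
          rw [mul_div_cancel₀ _ hδ.ne']
      _ ≤ δ * N := by exact mul_le_mul_right (h1.trans h2) δ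
  -- weights
  have hple : ∀ c ∈ F, p c ≤ 1 := fun c hc => hsum ▸ Finset.single_le_sum
    (fun c _ => zero_le) hc
  have hpt : ∀ c ∈ F, p c ≠ ⊤ := fun c hc => ((hple c hc).trans_lt ENNReal.one_lt_top).ne
  set q : X → ℝ≥0 := fun c => (p c).toNNReal with hqdef
  have hq : ∀ c ∈ F, (q c : ℝ≥0∞) = p c := fun c hc => ENNReal.coe_toNNReal (hpt c hc)
  have hsumq : ∑ c ∈ F, q c = 1 := by
    have h := hsum
    rw [← Finset.sum_congr rfl hq] at h
    exact_mod_cast h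
  set mc : X → ℕ := fun c => ⌊(N : ℝ≥0) * q c⌋₊ with hmc
  have hfl : ∀ c, (mc c : ℝ≥0) ≤ (N : ℝ≥0) * q c := fun c => Nat.floor_le zero_le
  have hfl' : ∀ c, (N : ℝ≥0) * q c ≤ (mc c : ℝ≥0) + 1 := fun c =>
    (Nat.lt_floor_add_one _).le
  have hsmc : ∑ c ∈ F, mc c ≤ N := by
    have : ((∑ c ∈ F, mc c : ℕ) : ℝ≥0) ≤ ((N : ℕ) : ℝ≥0) := by
      push_cast
      calc ∑ c ∈ F, (mc c : ℝ≥0) ≤ ∑ c ∈ F, (N : ℝ≥0) * q c := Finset.sum_le_sum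
            (fun c _ => hfl c)
        _ = (N : ℝ≥0) * ∑ c ∈ F, q c := by rw [Finset.mul_sum]
        _ = N := by rw [hsumq, mul_one]
    exact_mod_cast this
  set r : ℕ := N - ∑ c ∈ F, mc c with hr
  have hrm : r ≤ m := by
    have hNle : (N : ℝ≥0) ≤ ∑ c ∈ F, (mc c : ℝ≥0) + m := by
      calc (N : ℝ≥0) = (N : ℝ≥0) * ∑ c ∈ F, q c := by rw [hsumq, mul_one]
        _ = ∑ c ∈ F, (N : ℝ≥0) * q c := Finset.mul_sum _ _ _
        _ ≤ ∑ c ∈ F, ((mc c : ℝ≥0) + 1) := Finset.sum_le_sum fun c _ => hfl' c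
        _ = ∑ c ∈ F, (mc c : ℝ≥0) + m := by
            rw [Finset.sum_add_distrib, Finset.sum_const, hm]; simp [nsmul_eq_mul]
    have hNle' : N ≤ ∑ c ∈ F, mc c + m := by exact_mod_cast hNle
    omega
  -- the list of points
  set L : List X := (F.toList.map fun c => List.replicate (mc c) c).flatten
    ++ List.replicate r y₀ with hL
  have hlen : L.length = N := by
    rw [hL, List.length_append, List.length_flatten, List.length_replicate, List.map_map]
    have : (List.map (List.length ∘ fun c => List.replicate (mc c) c) F.toList).sum
        = ∑ c ∈ F, mc c := by
      rw [show (List.length ∘ fun c => List.replicate (mc c) c) = mc by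
        funext c; simp]
      exact Finset.sum_map_toList F mc
    rw [this]
    omega
  have hLS : ∀ a ∈ L, a ∈ Metric.sphere (0 : X) 1 := by
    intro a ha
    rw [hL, List.mem_append] at ha
    rcases ha with ha | ha
    · rw [List.mem_flatten] at ha
      rcases ha with ⟨l', hl', hal'⟩
      rw [List.mem_map] at hl'
      rcases hl' with ⟨c, hc, rfl⟩
      rw [List.eq_of_mem_replicate hal']
      exact hFS c (Finset.mem_toList.mp hc)
    · rw [List.eq_of_mem_replicate ha]; exact hy₀
  refine ⟨L.length, by omega, fun j => ⟨L.get j, hLS _ (List.get_mem L j)⟩, ?_⟩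
  -- the sum identity
  have hkey : ∀ g : X → ℝ≥0∞, ∑ j : Fin L.length, g (L.get j)
      = ∑ c ∈ F, (mc c : ℝ≥0∞) * g c + (r : ℝ≥0∞) * g y₀ := by
    intro g
    have h1 : ∑ j : Fin L.length, g (L.get j) = (L.map g).sum := by
      have := List.map_ofFn (f := L.get) (g := g)
      rw [List.ofFn_get] at this
      simp only [this, List.sum_ofFn, Function.comp_apply]
    rw [h1, hL, List.map_append, List.sum_append, List.map_flatten, List.map_map,
      List.sum_flatten, List.map_map, List.map_replicate, List.sum_replicate]
    congr 1
    · have : (List.map (List.sum ∘ List.map g ∘ fun c => List.replicate (mc c) c) F.toList)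
          = List.map (fun c => (mc c : ℝ≥0∞) * g c) F.toList := by
        apply List.map_congr_left
        intro c _
        simp [Function.comp, List.map_replicate, List.sum_replicate, nsmul_eq_mul]
      rw [this, Finset.sum_map_toList]
    · rw [nsmul_eq_mul]
  intro x hx
  set φ : ℝ≥0∞ := ∑ c ∈ F, p c * edist x c with hφ
  set Sx : ℝ≥0∞ := ∑ j : Fin L.length, edist x ((fun j => (⟨L.get j, hLS _ (List.get_mem L j)⟩ :
    Metric.sphere (0 : X) 1)) j : X) with hSx
  have hSx' : Sx = ∑ c ∈ F, (mc c : ℝ≥0∞) * edist x c + (r : ℝ≥0∞) * edist x y₀ :=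
    hkey (fun y => edist x y)
  have hlen' : (L.length : ℝ≥0∞) = (N : ℝ≥0∞) := Nat.cast_inj.mpr hlen
  have hmcle : ∀ c ∈ F, (mc c : ℝ≥0∞) ≤ (N : ℝ≥0∞) * p c := by
    intro c hc
    rw [← hq c hc]
    exact_mod_cast hfl c
  have hrle : (r : ℝ≥0∞) ≤ (δ : ℝ≥0∞) * N := by
    calc (r : ℝ≥0∞) ≤ (m : ℝ≥0∞) := by exact_mod_cast hrm
      _ ≤ (δ : ℝ≥0∞) * N := by exact_mod_cast hmN
  constructor
  · -- φ ≤ Sx / N + 2δ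
    have hup : (N : ℝ≥0∞) * φ ≤ Sx + (N : ℝ≥0∞) * (2 * δ) := by
      calc (N : ℝ≥0∞) * φ = ∑ c ∈ F, (N : ℝ≥0∞) * p c * edist x c := by
            rw [hφ, Finset.mul_sum]; simp [mul_assoc]
        _ ≤ ∑ c ∈ F, ((mc c : ℝ≥0∞) + 1) * edist x c := by
            refine Finset.sum_le_sum fun c hc => mul_le_mul_left ?_ _
            rw [← hq c hc]
            exact_mod_cast hfl' c
        _ = ∑ c ∈ F, (mc c : ℝ≥0∞) * edist x c + ∑ c ∈ F, edist x c := by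
            rw [← Finset.sum_add_distrib]; congr 1; ext c; ring
        _ ≤ ∑ c ∈ F, (mc c : ℝ≥0∞) * edist x c + (m : ℝ≥0∞) * 2 := by
            refine add_le_add_right ?_ _
            calc ∑ c ∈ F, edist x c ≤ ∑ _c ∈ F, (2 : ℝ≥0∞) := Finset.sum_le_sum
                  (fun c hc => edist_le_two hx (hFS c hc))
              _ = (m : ℝ≥0∞) * 2 := by rw [Finset.sum_const, hm]; simp [nsmul_eq_mul]
        _ ≤ Sx + (N : ℝ≥0∞) * (2 * δ) := by
            rw [hSx']
            refine add_le_add le_self_add ?_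
            calc (m : ℝ≥0∞) * 2 ≤ (δ : ℝ≥0∞) * N * 2 := by
                  exact mul_le_mul_left (by exact_mod_cast hmN) _
              _ = (N : ℝ≥0∞) * (2 * δ) := by ring
    calc φ = (N : ℝ≥0∞) * φ / N := by
          rw [mul_comm, mul_div_assoc, ENNReal.div_self hN0 hNt, mul_one]
      _ ≤ (Sx + (N : ℝ≥0∞) * (2 * δ)) / N := ENNReal.div_le_div_right hup _
      _ = Sx / N + (N : ℝ≥0∞) * (2 * δ) / N := ENNReal.add_div
      _ = Sx / (L.length : ℝ≥0∞) + 2 * δ := by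
          rw [hlen', mul_comm, mul_div_assoc, ENNReal.div_self hN0 hNt, mul_one]
  · -- Sx / N ≤ φ + 2δ
    have hdown : Sx ≤ (N : ℝ≥0∞) * (φ + 2 * δ) := by
      rw [hSx']
      calc ∑ c ∈ F, (mc c : ℝ≥0∞) * edist x c + (r : ℝ≥0∞) * edist x y₀
          ≤ ∑ c ∈ F, (N : ℝ≥0∞) * p c * edist x c + (δ : ℝ≥0∞) * N * 2 := by
            refine add_le_add (Finset.sum_le_sum fun c hc =>
              mul_le_mul_left (hmcle c hc) _) ?_
            exact mul_le_mul' hrle (edist_le_two hx hy₀)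
        _ = (N : ℝ≥0∞) * φ + (N : ℝ≥0∞) * (2 * δ) := by
            rw [hφ, Finset.mul_sum]
            congr 1
            · exact Finset.sum_congr rfl fun c _ => by ring
            · ring
        _ = (N : ℝ≥0∞) * (φ + 2 * δ) := by ring
    rw [hlen']
    exact ENNReal.div_le_of_le_mul (hdown.trans_eq (mul_comm _ _))


lemma discretize (μ : Measure X)
    (hμ : Rendezvous.TightProbOn μ (Metric.sphere (0 : X) 1))
    (y₀ : X) (hy₀ : y₀ ∈ Metric.sphere (0 : X) 1) (δ : ℝ≥0) (hδ : 0 < δ) :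
    ∃ n : ℕ, 1 ≤ n ∧ ∃ w : Fin n → Metric.sphere (0 : X) 1,
      ∀ x ∈ Metric.sphere (0 : X) 1,
      Rendezvous.pot (fun a b : X => edist a b) μ x
          ≤ (∑ j, edist x (w j : X)) / (n : ℝ≥0∞) + 5 * δ ∧
      (∑ j, edist x (w j : X)) / (n : ℝ≥0∞)
          ≤ Rendezvous.pot (fun a b : X => edist a b) μ x + 5 * δ := by
  obtain ⟨hprob, hreg, hnull⟩ := hμ
  haveI := hprob
  have hSm : MeasurableSet (Metric.sphere (0 : X) 1) := Metric.isClosed_sphere.measurableSet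
  have hμS : μ (Metric.sphere (0 : X) 1) = 1 := by
    have h := measure_add_measure_compl (μ := μ) hSm
    rw [hnull, add_zero, measure_univ] at h
    exact h
  -- a large compact subset of the sphere
  have h1 : (1 : ℝ≥0∞) - δ < μ (Metric.sphere (0 : X) 1) := by
    rw [hμS]
    exact ENNReal.sub_lt_self one_ne_top one_ne_zero (by exact_mod_cast hδ.ne')
  obtain ⟨K, hKS, hKc, hKgt⟩ := hreg.innerRegular hSm _ h1
  have hKm : MeasurableSet K := hKc.isClosed.measurableSet
  have hKcompl : μ Kᶜ ≤ δ := by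
    by_contra h
    push_neg at h
    have hadd : μ K + μ Kᶜ = 1 := by rw [measure_add_measure_compl (μ := μ) hKm, measure_univ]
    have hlt : (1 : ℝ≥0∞) < μ K + μ Kᶜ :=
      calc (1 : ℝ≥0∞) ≤ (1 - δ) + δ := le_tsub_add
        _ < μ K + μ Kᶜ := ENNReal.add_lt_add hKgt h
    rw [hadd] at hlt
    exact absurd hlt (lt_irrefl _)
  -- finite cover of K by δ-balls
  obtain ⟨t, htK, htfin, hcov⟩ := hKc.finite_cover_balls (by exact_mod_cast hδ : (0 : ℝ) < δ)
  set l : List X := htfin.toFinset.toList with hldef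
  have hlK : ∀ c ∈ l, c ∈ K := fun c hc =>
    htK (htfin.mem_toFinset.mp (Finset.mem_toList.mp hc))
  set f : X → X := pick (δ : ℝ) y₀ l with hfdef
  have hfm : Measurable f := pick_measurable _ _ _
  set F : Finset X := insert y₀ l.toFinset with hFdef
  have hfF : ∀ y, f y ∈ F := by
    intro y
    rcases pick_mem (δ : ℝ) y₀ l y with h | h
    · rw [hfdef, h]; exact Finset.mem_insert_self _ _
    · exact Finset.mem_insert_of_mem (List.mem_toFinset.mpr h)
  have hFS : ∀ c ∈ F, c ∈ Metric.sphere (0 : X) 1 := by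
    intro c hc
    rcases Finset.mem_insert.mp hc with rfl | hc
    · exact hy₀
    · exact hKS (hlK c (List.mem_toFinset.mp hc))
  have hfS : ∀ y, f y ∈ Metric.sphere (0 : X) 1 := fun y => hFS _ (hfF y)
  -- the rounding error integral is at most 3δ
  have hclose : ∀ y ∈ K, edist y (f y) ≤ (δ : ℝ≥0∞) := by
    intro y hy
    have hex : ∃ c ∈ l, y ∈ Metric.ball c (δ : ℝ) := by
      have := hcov hy
      rw [Set.mem_iUnion₂] at this
      rcases this with ⟨c, hc, hyc⟩
      exact ⟨c, Finset.mem_toList.mpr (htfin.mem_toFinset.mpr hc), hyc⟩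
    have h := pick_close (δ : ℝ) y₀ l y hex
    rw [edist_dist]
    calc ENNReal.ofReal (dist y (f y)) ≤ ENNReal.ofReal (δ : ℝ) :=
          ENNReal.ofReal_le_ofReal h.le
      _ = (δ : ℝ≥0∞) := ENNReal.ofReal_coe_nnreal
  have haeS : ∀ᵐ y ∂μ, y ∈ Metric.sphere (0 : X) 1 := by
    rw [ae_iff]
    convert hnull using 2
    rfl
  have herr : ∫⁻ y, edist y (f y) ∂μ ≤ 3 * δ := by
    have hb : ∀ᵐ y ∂μ, edist y (f y) ≤
        K.indicator (fun _ => (δ : ℝ≥0∞)) y + Kᶜ.indicator (fun _ => (2 : ℝ≥0∞)) y := by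
      filter_upwards [haeS] with y hyS
      by_cases hyK : y ∈ K
      · rw [Set.indicator_of_mem hyK, Set.indicator_of_notMem (by simpa using hyK), add_zero]
        exact hclose y hyK
      · rw [Set.indicator_of_notMem hyK, Set.indicator_of_mem (by simpa using hyK), zero_add]
        exact edist_le_two hyS (hfS y)
    calc ∫⁻ y, edist y (f y) ∂μ
        ≤ ∫⁻ y, (K.indicator (fun _ => (δ : ℝ≥0∞)) y
            + Kᶜ.indicator (fun _ => (2 : ℝ≥0∞)) y) ∂μ := lintegral_mono_ae hb
      _ = (δ : ℝ≥0∞) * μ K + 2 * μ Kᶜ := by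
          rw [lintegral_add_left (measurable_const.indicator hKm),
            lintegral_indicator_const hKm, lintegral_indicator_const hKm.compl]
      _ ≤ (δ : ℝ≥0∞) * 1 + 2 * δ :=
          add_le_add (mul_le_mul_right prob_le_one _) (mul_le_mul_right hKcompl _)
      _ = 3 * δ := by ring
  -- the discrete potential
  have hψ : ∀ x : X, ∫⁻ y, edist x (f y) ∂μ = ∑ c ∈ F, μ (f ⁻¹' {c}) * edist x c :=
    fun x => lintegral_comp_finiteRange μ f hfm F hfF _ (continuous_const.edist continuous_id).measurable
  have hsum1 : ∑ c ∈ F, μ (f ⁻¹' {c}) = 1 := by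
    have h := lintegral_comp_finiteRange μ f hfm F hfF (fun _ => (1 : ℝ≥0∞)) measurable_const
    simpa [lintegral_const, measure_univ] using h.symm
  -- comparison between pot and the discrete potential
  have hmem : Measurable fun y : X => edist y (f y) := pick_edist_measurable _ _ _
  have hcmp1 : ∀ x : X, Rendezvous.pot (fun a b : X => edist a b) μ x
      ≤ (∫⁻ y, edist x (f y) ∂μ) + 3 * δ := by
    intro x
    calc Rendezvous.pot (fun a b : X => edist a b) μ x
        = ∫⁻ y, edist x y ∂μ := rfl
      _ ≤ ∫⁻ y, (edist x (f y) + edist y (f y)) ∂μ := by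
          refine lintegral_mono fun y => ?_
          rw [edist_comm y (f y)]
          exact edist_triangle _ _ _
      _ = (∫⁻ y, edist x (f y) ∂μ) + ∫⁻ y, edist y (f y) ∂μ := lintegral_add_right _ hmem
      _ ≤ (∫⁻ y, edist x (f y) ∂μ) + 3 * δ := add_le_add_right herr _
  have hcmp2 : ∀ x : X, (∫⁻ y, edist x (f y) ∂μ)
      ≤ Rendezvous.pot (fun a b : X => edist a b) μ x + 3 * δ := by
    intro x
    calc ∫⁻ y, edist x (f y) ∂μ
        ≤ ∫⁻ y, (edist x y + edist y (f y)) ∂μ := by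
          refine lintegral_mono fun y => ?_
          exact edist_triangle _ _ _
      _ = (∫⁻ y, edist x y ∂μ) + ∫⁻ y, edist y (f y) ∂μ := lintegral_add_right _ hmem
      _ ≤ Rendezvous.pot (fun a b : X => edist a b) μ x + 3 * δ := add_le_add_right herr _
  -- rationalize
  obtain ⟨n, hn, w, hw⟩ := ration F hFS y₀ hy₀ (fun c => μ (f ⁻¹' {c})) hsum1 δ hδ
  refine ⟨n, hn, w, fun x hx => ⟨?_, ?_⟩⟩
  · calc Rendezvous.pot (fun a b : X => edist a b) μ x
        ≤ (∫⁻ y, edist x (f y) ∂μ) + 3 * δ := hcmp1 x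
      _ = (∑ c ∈ F, μ (f ⁻¹' {c}) * edist x c) + 3 * δ := by rw [hψ x]
      _ ≤ ((∑ j, edist x (w j : X)) / (n : ℝ≥0∞) + 2 * δ) + 3 * δ :=
          add_le_add_left (hw x hx).1 _
      _ = (∑ j, edist x (w j : X)) / (n : ℝ≥0∞) + 5 * δ := by ring
  · calc (∑ j, edist x (w j : X)) / (n : ℝ≥0∞)
        ≤ (∑ c ∈ F, μ (f ⁻¹' {c}) * edist x c) + 2 * δ := (hw x hx).2
      _ = (∫⁻ y, edist x (f y) ∂μ) + 2 * δ := by rw [hψ x]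
      _ ≤ (Rendezvous.pot (fun a b : X => edist a b) μ x + 3 * δ) + 2 * δ :=
          add_le_add_left (hcmp2 x) _
      _ = Rendezvous.pot (fun a b : X => edist a b) μ x + 5 * δ := by ring

end RendAux

open RendAux

/-- For a nonzero real normed space `X` with unit sphere `S_X` and the
kernel `k(x,y) = ‖x - y‖`, the average interval of `S_X` equals the rendezvous
interval of `S_X` and both are nonempty:
`q̲(S_X,S_X) = M(S_X) ≤ M̄(S_X) = q(S_X,S_X)`, i.e. `𝓐(X) = 𝓡(X) ≠ ∅`. -/
theorem average_eq_rendezvous_sphere {X : Type*} [NormedAddCommGroup X]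
    [NormedSpace ℝ X] [Nontrivial X] [MeasurableSpace X] [BorelSpace X] :
    qLow (fun x y : X => edist x y) (Metric.sphere (0 : X) 1) (Metric.sphere (0 : X) 1)
        = chebM (fun x y : X => edist x y) (Metric.sphere (0 : X) 1) (Metric.sphere (0 : X) 1) ∧
    chebM (fun x y : X => edist x y) (Metric.sphere (0 : X) 1) (Metric.sphere (0 : X) 1)
        ≤ chebMDual (fun x y : X => edist x y) (Metric.sphere (0 : X) 1) (Metric.sphere (0 : X) 1) ∧
    chebMDual (fun x y : X => edist x y) (Metric.sphere (0 : X) 1) (Metric.sphere (0 : X) 1)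
        = qUp (fun x y : X => edist x y) (Metric.sphere (0 : X) 1) (Metric.sphere (0 : X) 1) := by
  classical
  set S : Set X := Metric.sphere (0 : X) 1 with hSdef
  set k : X → X → ℝ≥0∞ := fun x y : X => edist x y with hkdef
  obtain ⟨y₀, hy₀⟩ : S.Nonempty := NormedSpace.sphere_nonempty.mpr zero_le_one
  haveI hne : Nonempty S := ⟨⟨y₀, hy₀⟩⟩
  -- relating constants built from finitely many points to empirical measures
  have hemp_inf : ∀ (n : ℕ) (w : Fin n → S),
      (⨅ x : S, pot k (empMeas n w) (x : X)) = ⨅ x : S, (∑ j, k (x : X) (w j : X)) / (n : ℝ≥0∞) :=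
    fun n w => iInf_congr fun x => empMeas_pot n w (x : X)
  have hemp_sup : ∀ (n : ℕ) (w : Fin n → S),
      (⨆ x : S, pot k (empMeas n w) (x : X)) = ⨆ x : S, (∑ j, k (x : X) (w j : X)) / (n : ℝ≥0∞) :=
    fun n w => iSup_congr fun x => empMeas_pot n w (x : X)
  -- (1a) chebM ≤ qLow
  have h1a : chebM k S S ≤ qLow k S S := by
    refine iSup₂_le fun n hn => iSup_le fun w => ?_
    refine le_iSup₂_of_le (empMeas n w) (empMeas_tight n hn w) ?_
    rw [hemp_inf n w]
  -- (1b) qLow ≤ chebM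
  have h1b : qLow k S S ≤ chebM k S S := by
    refine iSup₂_le fun μ hμ => ?_
    refine ENNReal.le_of_forall_pos_le_add fun ε hε _ => ?_
    set δ : ℝ≥0 := ε / 5 with hδdef
    have hδ : 0 < δ := by positivity
    have h5δ : (5 : ℝ≥0∞) * (δ : ℝ≥0∞) = (ε : ℝ≥0∞) := by
      rw [hδdef]
      rw [show ((ε / 5 : ℝ≥0) : ℝ≥0∞) = (ε : ℝ≥0∞) / 5 by
        rw [ENNReal.coe_div (by norm_num)]; norm_num]
      rw [ENNReal.mul_div_cancel' (by norm_num) (by norm_num)]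
    obtain ⟨n, hn, w, hw⟩ := discretize μ hμ y₀ hy₀ δ hδ
    calc (⨅ x : S, pot k μ (x : X))
        ≤ ⨅ x : S, ((∑ j, k (x : X) (w j : X)) / (n : ℝ≥0∞) + ε) := by
          refine le_iInf fun x => (iInf_le _ x).trans ?_
          rw [← h5δ]
          exact (hw (x : X) x.2).1
      _ = (⨅ x : S, (∑ j, k (x : X) (w j : X)) / (n : ℝ≥0∞)) + ε := ENNReal.iInf_add.symm
      _ ≤ chebMn k n S S + ε := by
          refine add_le_add_left ?_ _
          exact le_iSup (fun w' : Fin n → S => ⨅ x : S, (∑ j, k (x : X) (w' j : X)) / (n : ℝ≥0∞)) w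
      _ ≤ chebM k S S + ε := add_le_add_left (le_iSup₂ (f := fun n _ => chebMn k n S S) n hn) _
  -- (3a) qUp ≤ chebMDual
  have h3a : qUp k S S ≤ chebMDual k S S := by
    refine le_iInf₂ fun n hn => le_iInf fun w => ?_
    refine (iInf₂_le (empMeas n w) (empMeas_tight n hn w)).trans ?_
    rw [hemp_sup n w]
  -- (3b) chebMDual ≤ qUp
  have h3b : chebMDual k S S ≤ qUp k S S := by
    refine le_iInf₂ fun μ hμ => ?_
    refine ENNReal.le_of_forall_pos_le_add fun ε hε _ => ?_
    set δ : ℝ≥0 := ε / 5 with hδdef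
    have hδ : 0 < δ := by positivity
    have h5δ : (5 : ℝ≥0∞) * (δ : ℝ≥0∞) = (ε : ℝ≥0∞) := by
      rw [hδdef]
      rw [show ((ε / 5 : ℝ≥0) : ℝ≥0∞) = (ε : ℝ≥0∞) / 5 by
        rw [ENNReal.coe_div (by norm_num)]; norm_num]
      rw [ENNReal.mul_div_cancel' (by norm_num) (by norm_num)]
    obtain ⟨n, hn, w, hw⟩ := discretize μ hμ y₀ hy₀ δ hδ
    calc chebMDual k S S ≤ chebMnDual k n S S := iInf₂_le n hn
      _ ≤ ⨆ x : S, (∑ j, k (x : X) (w j : X)) / (n : ℝ≥0∞) :=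
          iInf_le (fun w' : Fin n → S => ⨆ x : S, (∑ j, k (x : X) (w' j : X)) / (n : ℝ≥0∞)) w
      _ ≤ (⨆ x : S, pot k μ (x : X)) + ε := by
          refine iSup_le fun x => ?_
          have h := (hw (x : X) x.2).2
          rw [h5δ] at h
          exact h.trans (add_le_add_left (le_iSup (fun x : S => pot k μ (x : X)) x) _)
  -- (2) chebM ≤ chebMDual
  have h2 : chebM k S S ≤ chebMDual k S S := by
    refine iSup₂_le fun n hn => iSup_le fun w => le_iInf₂ fun m hm => le_iInf fun v => ?_
    have hn0 : (n : ℝ≥0∞) ≠ 0 := Nat.cast_ne_zero.mpr (by omega)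
    have hnt : (n : ℝ≥0∞) ≠ ⊤ := ENNReal.natCast_ne_top n
    have hm0 : (m : ℝ≥0∞) ≠ 0 := Nat.cast_ne_zero.mpr (by omega)
    have hmt : (m : ℝ≥0∞) ≠ ⊤ := ENNReal.natCast_ne_top m
    set A : ℝ≥0∞ := ⨅ x : S, (∑ j, k (x : X) (w j : X)) / (n : ℝ≥0∞) with hA
    set B : ℝ≥0∞ := ⨆ x : S, (∑ i, k (x : X) (v i : X)) / (m : ℝ≥0∞) with hB
    set T : ℝ≥0∞ := ∑ i : Fin m, ∑ j : Fin n, edist (v i : X) (w j : X) with hT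
    have hTA : (m : ℝ≥0∞) * A ≤ T / (n : ℝ≥0∞) := by
      calc (m : ℝ≥0∞) * A = ∑ _i : Fin m, A := by
            rw [Finset.sum_const, Finset.card_univ, Fintype.card_fin, nsmul_eq_mul]
        _ ≤ ∑ i : Fin m, (∑ j, edist (v i : X) (w j : X)) / (n : ℝ≥0∞) :=
            Finset.sum_le_sum fun i _ => iInf_le
              (fun x : S => (∑ j, k (x : X) (w j : X)) / (n : ℝ≥0∞)) (v i)
        _ = T / (n : ℝ≥0∞) := by
            rw [hT, div_eq_mul_inv, Finset.sum_mul]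
            exact Finset.sum_congr rfl fun i _ => (div_eq_mul_inv _ _).symm
    have hTB : T ≤ (n : ℝ≥0∞) * ((m : ℝ≥0∞) * B) := by
      have hswap : T = ∑ j : Fin n, ∑ i : Fin m, edist ((w j : X)) (v i : X) := by
        rw [hT, Finset.sum_comm]
        exact Finset.sum_congr rfl fun j _ => Finset.sum_congr rfl fun i _ => edist_comm _ _
      rw [hswap]
      calc ∑ j : Fin n, ∑ i : Fin m, edist ((w j : X)) (v i : X)
          ≤ ∑ _j : Fin n, (m : ℝ≥0∞) * B := by
            refine Finset.sum_le_sum fun j _ => ?_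
            have hj : (∑ i, edist ((w j : X)) (v i : X)) / (m : ℝ≥0∞) ≤ B :=
              le_iSup (fun x : S => (∑ i, k (x : X) (v i : X)) / (m : ℝ≥0∞)) (w j)
            calc ∑ i, edist ((w j : X)) (v i : X)
                = (∑ i, edist ((w j : X)) (v i : X)) / (m : ℝ≥0∞) * (m : ℝ≥0∞) :=
                  (ENNReal.div_mul_cancel hm0 hmt).symm
              _ ≤ B * (m : ℝ≥0∞) := mul_le_mul_left hj _
              _ = (m : ℝ≥0∞) * B := mul_comm _ _
        _ = (n : ℝ≥0∞) * ((m : ℝ≥0∞) * B) := by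
            rw [Finset.sum_const, Finset.card_univ, Fintype.card_fin, nsmul_eq_mul]
    calc A = (m : ℝ≥0∞) * A / (m : ℝ≥0∞) := by
          rw [mul_comm, mul_div_assoc, ENNReal.div_self hm0 hmt, mul_one]
      _ ≤ (T / (n : ℝ≥0∞)) / (m : ℝ≥0∞) := ENNReal.div_le_div_right hTA _
      _ ≤ ((n : ℝ≥0∞) * ((m : ℝ≥0∞) * B) / (n : ℝ≥0∞)) / (m : ℝ≥0∞) :=
          ENNReal.div_le_div_right (ENNReal.div_le_div_right hTB _) _
      _ = B := by
          rw [mul_comm (n : ℝ≥0∞) _, mul_div_assoc, ENNReal.div_self hn0 hnt, mul_one,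
            mul_comm (m : ℝ≥0∞) _, mul_div_assoc, ENNReal.div_self hm0 hmt, mul_one]
  exact ⟨le_antisymm h1b h1a, h2, le_antisymm h3b h3a⟩
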